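/- The function 𝒴(x) = [∏_{s=1}^{2m-1} x²·ϑ_{q⁴}(x^{-2}p^s)·ϑ_{q⁴}(x²q²p^s)/(ϑ_{q⁴}(x²p^s)·ϑ_{q⁴}(x^{-2}q²p^s))]² satisfies 𝒴(q²·x) = 𝒴(x) for all x in its domain, for any positive integer m and 0 < |p|, |q| < 1. -/

import Mathlib

set_option maxHeartbeats 1000000


open Complex Finset

/-- The q-Pochhammer infinite product `(x;a)_∞ = ∏_{n≥0} (1 - x aⁿ)`. -/
noncomputable def qPoch (x a : ℂ) : ℂ := ∏' n : ℕ, (1 - x * a ^ n)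

/-- The Jacobi theta function `ϑ_a(x) = (x;a)_∞ (a x⁻¹;a)_∞ (a;a)_∞`. -/
noncomputable def theta (a x : ℂ) : ℂ := qPoch x a * qPoch (a * x⁻¹) a * qPoch a a

/-- The exchange function `𝒴(x)` of eq. (2.10), for positive `m`. -/
noncomputable def Yexch (q p : ℂ) (m : ℕ) (x : ℂ) : ℂ :=
  (∏ s ∈ Finset.Icc 1 (2 * m - 1),
    x ^ 2 * theta (q ^ 4) (x⁻¹ ^ 2 * p ^ (s : ℤ)) * theta (q ^ 4) (x ^ 2 * q ^ 2 * p ^ (s : ℤ)) /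
      (theta (q ^ 4) (x ^ 2 * p ^ (s : ℤ)) * theta (q ^ 4) (x⁻¹ ^ 2 * q ^ 2 * p ^ (s : ℤ)))) ^ 2

open Filter in
/-- The products defining `qPoch` are multipliable whenever `‖a‖ < 1`. -/
lemma multipliable_one_sub_mul_pow (a z : ℂ) (ha : ‖a‖ < 1) :
    Multipliable (fun n : ℕ => 1 - z * a ^ n) := by
  by_cases hzero : ∃ n : ℕ, (1 : ℂ) - z * a ^ n = 0
  · obtain ⟨n₀, hn₀⟩ := hzero
    refine ⟨0, ?_⟩
    have hev : ∀ᶠ s : Finset ℕ in atTop, ∏ i ∈ s, (1 - z * a ^ i) = 0 := by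
      filter_upwards [eventually_ge_atTop ({n₀} : Finset ℕ)] with s hs
      exact Finset.prod_eq_zero (hs (Finset.mem_singleton_self n₀)) hn₀
    exact Tendsto.congr' (hev.mono fun s hs => hs.symm) tendsto_const_nhds
  · push_neg at hzero
    have htend : Tendsto (fun n : ℕ => ‖z‖ * ‖a‖ ^ n) atTop (nhds 0) := by
      simpa using (tendsto_pow_atTop_nhds_zero_of_lt_one (norm_nonneg a) ha).const_mul ‖z‖
    have hev : ∀ᶠ n : ℕ in atTop, ‖z‖ * ‖a‖ ^ n ≤ 1 / 2 := by
      filter_upwards [htend.eventually_lt_const (by norm_num : (0 : ℝ) < 1 / 2)] with n h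
      exact h.le
    have hsum : Summable (fun n : ℕ => Complex.log (1 - z * a ^ n)) := by
      refine Summable.of_norm_bounded_eventually_nat
        (g := fun n => 3 / 2 * (‖z‖ * ‖a‖ ^ n)) ?_ ?_
      · exact ((summable_geometric_of_lt_one (norm_nonneg a) ha).mul_left ‖z‖).mul_left _
      · filter_upwards [hev] with n hn
        have h1 : (1 : ℂ) - z * a ^ n = 1 + (-(z * a ^ n)) := by ring
        have h2 : ‖-(z * a ^ n)‖ ≤ 1 / 2 := by
          rw [norm_neg, norm_mul, norm_pow]; exact hn
        calc ‖Complex.log (1 - z * a ^ n)‖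
            = ‖Complex.log (1 + (-(z * a ^ n)))‖ := by rw [h1]
          _ ≤ 3 / 2 * ‖-(z * a ^ n)‖ := Complex.norm_log_one_add_half_le_self h2
          _ = 3 / 2 * (‖z‖ * ‖a‖ ^ n) := by rw [norm_neg, norm_mul, norm_pow]
    exact Complex.multipliable_of_summable_log hsum

/-- Shifting the argument of `qPoch` by `a` removes the first factor. -/
lemma qPoch_shift (a y : ℂ) (ha : ‖a‖ < 1) :
    qPoch y a = (1 - y) * qPoch (a * y) a := by
  have hmult : Multipliable (fun n : ℕ => 1 - y * a ^ (n + 1)) := by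
    refine (multipliable_one_sub_mul_pow a (y * a) ha).congr fun n => ?_
    ring
  have h1 : qPoch (a * y) a = ∏' n : ℕ, (1 - y * a ^ (n + 1)) := by
    unfold qPoch
    exact tprod_congr fun n => by ring
  rw [qPoch, tprod_eq_zero_mul' hmult, pow_zero, mul_one, h1]

/-- Quasi-periodicity of the Jacobi theta function: `ϑ_a(a y) = -y⁻¹ ϑ_a(y)`. -/
lemma theta_shift (a y : ℂ) (ha : ‖a‖ < 1) (ha0 : a ≠ 0) (hy : y ≠ 0) :
    theta a (a * y) = -y⁻¹ * theta a y := by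
  have hinv : a * (a * y)⁻¹ = y⁻¹ := by
    field_simp
  unfold theta
  rw [hinv, qPoch_shift a y ha, qPoch_shift a y⁻¹ ha]
  have hfrac : (1 : ℂ) - y⁻¹ = -y⁻¹ * (1 - y) := by
    field_simp
    ring
  rw [hfrac]
  ring

/-- The elementary rational-function identity underlying the periodicity. -/
lemma key_alg (q x P A B C D : ℂ) (hq : q ≠ 0) (hx : x ≠ 0) (hP : P ≠ 0)
    (hC : C ≠ 0) (hD : D ≠ 0) :
    (q ^ 2 * x) ^ 2 * (-((q ^ 2 * x)⁻¹ ^ 2 * P) * A) * (-(x ^ 2 * q ^ 2 * P)⁻¹ * B) /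
      ((-(x ^ 2 * P)⁻¹ * C) * (-((q ^ 2 * x)⁻¹ ^ 2 * q ^ 2 * P) * D))
    = x ^ 2 * A * B / (C * D) := by
  have hqx : (q ^ 2 * x : ℂ) ≠ 0 := mul_ne_zero (pow_ne_zero 2 hq) hx
  rw [inv_pow]
  rw [inv_eq_one_div ((q ^ 2 * x) ^ 2)]
  field_simp

theorem Y_q_sq_periodic (q p : ℂ) (hq0 : 0 < ‖q‖) (hq1 : ‖q‖ < 1)
    (hp0 : 0 < ‖p‖) (hp1 : ‖p‖ < 1)
    (m : ℕ) (hm : 0 < m) (x : ℂ) (hx : x ≠ 0)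
    (hden : ∀ s ∈ Finset.Icc 1 (2 * m - 1),
      theta (q ^ 4) (x ^ 2 * p ^ (s : ℤ)) ≠ 0 ∧
      theta (q ^ 4) (x⁻¹ ^ 2 * q ^ 2 * p ^ (s : ℤ)) ≠ 0)
    (hden' : ∀ s ∈ Finset.Icc 1 (2 * m - 1),
      theta (q ^ 4) ((q ^ 2 * x) ^ 2 * p ^ (s : ℤ)) ≠ 0 ∧
      theta (q ^ 4) ((q ^ 2 * x)⁻¹ ^ 2 * q ^ 2 * p ^ (s : ℤ)) ≠ 0) :
    Yexch q p m (q ^ 2 * x) = Yexch q p m x := by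
  have hq : q ≠ 0 := by
    intro h; rw [h] at hq0; simp at hq0
  have hp : p ≠ 0 := by
    intro h; rw [h] at hp0; simp at hp0
  have ha0 : (q : ℂ) ^ 4 ≠ 0 := pow_ne_zero 4 hq
  have ha : ‖(q : ℂ) ^ 4‖ < 1 := by
    rw [norm_pow]
    calc ‖q‖ ^ 4 ≤ ‖q‖ ^ 1 := by
          apply pow_le_pow_of_le_one (norm_nonneg q) (le_of_lt hq1)
          norm_num
      _ < 1 := by simpa using hq1
  unfold Yexch
  congr 1
  refine Finset.prod_congr rfl fun s hs => ?_
  obtain ⟨hC, hD⟩ := hden s hs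
  have hP : p ^ (s : ℤ) ≠ 0 := zpow_ne_zero _ hp
  set P := p ^ (s : ℤ) with hPdef
  -- nonvanishing of the basic pieces
  have hx2P : x ^ 2 * P ≠ 0 := by
    exact mul_ne_zero (pow_ne_zero 2 hx) hP
  have hx2qP : x ^ 2 * q ^ 2 * P ≠ 0 :=
    mul_ne_zero (mul_ne_zero (pow_ne_zero 2 hx) (pow_ne_zero 2 hq)) hP
  have hy3 : (q ^ 2 * x)⁻¹ ^ 2 * P ≠ 0 :=
    mul_ne_zero (pow_ne_zero 2 (inv_ne_zero (mul_ne_zero (pow_ne_zero 2 hq) hx))) hP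
  have hy4 : (q ^ 2 * x)⁻¹ ^ 2 * q ^ 2 * P ≠ 0 :=
    mul_ne_zero (mul_ne_zero (pow_ne_zero 2
      (inv_ne_zero (mul_ne_zero (pow_ne_zero 2 hq) hx))) (pow_ne_zero 2 hq)) hP
  -- relation 1: theta at (q²x)² P
  have t1 : theta (q ^ 4) ((q ^ 2 * x) ^ 2 * P) = -(x ^ 2 * P)⁻¹ * theta (q ^ 4) (x ^ 2 * P) := by
    have e : (q ^ 2 * x) ^ 2 * P = q ^ 4 * (x ^ 2 * P) := by ring
    rw [e]
    exact theta_shift _ _ ha ha0 hx2P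
  -- relation 2: theta at (q²x)² q² P
  have t2 : theta (q ^ 4) ((q ^ 2 * x) ^ 2 * q ^ 2 * P)
      = -(x ^ 2 * q ^ 2 * P)⁻¹ * theta (q ^ 4) (x ^ 2 * q ^ 2 * P) := by
    have e : (q ^ 2 * x) ^ 2 * q ^ 2 * P = q ^ 4 * (x ^ 2 * q ^ 2 * P) := by ring
    rw [e]
    exact theta_shift _ _ ha ha0 hx2qP
  -- relation 3: theta at (q²x)⁻² P
  have t3 : theta (q ^ 4) ((q ^ 2 * x)⁻¹ ^ 2 * P)
      = -((q ^ 2 * x)⁻¹ ^ 2 * P) * theta (q ^ 4) (x⁻¹ ^ 2 * P) := by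
    have e : x⁻¹ ^ 2 * P = q ^ 4 * ((q ^ 2 * x)⁻¹ ^ 2 * P) := by
      field_simp
    have h := theta_shift (q ^ 4) ((q ^ 2 * x)⁻¹ ^ 2 * P) ha ha0 hy3
    rw [← e] at h
    rw [h]
    field_simp
  -- relation 4: theta at (q²x)⁻² q² P
  have t4 : theta (q ^ 4) ((q ^ 2 * x)⁻¹ ^ 2 * q ^ 2 * P)
      = -((q ^ 2 * x)⁻¹ ^ 2 * q ^ 2 * P) * theta (q ^ 4) (x⁻¹ ^ 2 * q ^ 2 * P) := by
    have e : x⁻¹ ^ 2 * q ^ 2 * P = q ^ 4 * ((q ^ 2 * x)⁻¹ ^ 2 * q ^ 2 * P) := by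
      field_simp
    have h := theta_shift (q ^ 4) ((q ^ 2 * x)⁻¹ ^ 2 * q ^ 2 * P) ha ha0 hy4
    rw [← e] at h
    rw [h]
    field_simp
  rw [t1, t2, t3, t4]
  exact key_alg q x P _ _ _ _ hq hx hP hC hD
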